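/- Let I ≥ 2 and let Y := {y ∈ ℝ^I : ∑_i y_i = 0 and −F_l ≤ ∑_i π_{il} y_i ≤ F_l for all l} with F_l ≥ 0, and let P_Y denote Euclidean projection onto Y. Fix i, and let b, b' ∈ ℝ^I with b'_j = b_j for all j ≠ i and b'_i ≥ b_i. Then 0 ≤ (P_Y(b'))_i − (P_Y(b))_i ≤ ((I−1)/I)·(b'_i − b_i). -/
import Mathlib


open Finset

noncomputable section

/-- Feasible set of cleared quantities: balance plus line flow limits. -/
def Ysh (I L : ℕ) (ptdf : Fin I → Fin L → ℝ) (F : Fin L → ℝ) : Set (Fin I → ℝ) :=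
  {y | ∑ i, y i = 0 ∧ ∀ l, |∑ i, ptdf i l * y i| ≤ F l}

/-- `y` is the Euclidean projection of `b` onto `Ysh I L ptdf F`. -/
def IsProj (I L : ℕ) (ptdf : Fin I → Fin L → ℝ) (F : Fin L → ℝ)
    (b y : Fin I → ℝ) : Prop :=
  y ∈ Ysh I L ptdf F ∧
    ∀ z ∈ Ysh I L ptdf F, ∑ i, (b i - y i) ^ 2 ≤ ∑ i, (b i - z i) ^ 2

/-- Variational inequality for the projection onto the convex set `Ysh`. -/
lemma varineq {I L : ℕ} {ptdf : Fin I → Fin L → ℝ} {F : Fin L → ℝ}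
    {b y : Fin I → ℝ} (h : IsProj I L ptdf F b y)
    {z : Fin I → ℝ} (hz : z ∈ Ysh I L ptdf F) :
    ∑ j, (b j - y j) * (z j - y j) ≤ 0 := by
  by_contra hA
  push_neg at hA
  set A := ∑ j, (b j - y j) * (z j - y j) with hAdef
  set B := ∑ j, (z j - y j) ^ 2 with hBdef
  have hB0 : 0 ≤ B := Finset.sum_nonneg fun j _ => sq_nonneg _
  have hy := h.1
  have key : ∀ t : ℝ, 0 ≤ t → t ≤ 1 → 2 * t * A ≤ t ^ 2 * B := by
    intro t ht0 ht1
    have hw : (fun j => y j + t * (z j - y j)) ∈ Ysh I L ptdf F := by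
      constructor
      · have h1 : ∑ j, y j = 0 := hy.1
        have h2 : ∑ j, z j = 0 := hz.1
        have : ∑ j, (y j + t * (z j - y j))
            = (∑ j, y j) + t * ((∑ j, z j) - (∑ j, y j)) := by
          rw [Finset.sum_add_distrib, ← Finset.mul_sum, Finset.sum_sub_distrib]
        rw [this, h1, h2]; ring
      · intro l
        have h1 := hy.2 l
        have h2 := hz.2 l
        have hrw : ∑ j, ptdf j l * (y j + t * (z j - y j))
            = (1 - t) * (∑ j, ptdf j l * y j) + t * (∑ j, ptdf j l * z j) := by
          rw [Finset.mul_sum, Finset.mul_sum, ← Finset.sum_add_distrib]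
          exact Finset.sum_congr rfl fun j _ => by ring
        rw [hrw]
        calc |(1 - t) * (∑ j, ptdf j l * y j) + t * (∑ j, ptdf j l * z j)|
            ≤ (1 - t) * |∑ j, ptdf j l * y j| + t * |∑ j, ptdf j l * z j| := by
              refine (abs_add_le _ _).trans ?_
              rw [abs_mul, abs_mul, abs_of_nonneg (by linarith), abs_of_nonneg ht0]
          _ ≤ (1 - t) * F l + t * F l := by
              have hA1 : |∑ j, ptdf j l * y j| ≤ F l := h1
              have hA2 : |∑ j, ptdf j l * z j| ≤ F l := h2
              have h1t : (0:ℝ) ≤ 1 - t := by linarith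
              nlinarith
          _ = F l := by ring
    have hmin := h.2 _ hw
    have expand : ∑ j, (b j - (y j + t * (z j - y j))) ^ 2
        = (∑ j, (b j - y j) ^ 2) - 2 * t * A + t ^ 2 * B := by
      rw [hAdef, hBdef, Finset.mul_sum, Finset.mul_sum, ← Finset.sum_sub_distrib,
        ← Finset.sum_add_distrib]
      exact Finset.sum_congr rfl fun j _ => by ring
    rw [expand] at hmin
    linarith
  rcases eq_or_lt_of_le hB0 with hB | hB
  · have := key 1 zero_le_one le_rfl
    rw [← hB] at this
    linarith
  · set t : ℝ := min 1 (A / B) with ht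
    have ht0 : 0 < t := lt_min one_pos (div_pos hA hB)
    have ht1 : t ≤ 1 := min_le_left _ _
    have htAB : t ≤ A / B := min_le_right _ _
    have htB : t * B ≤ A := by
      rw [← le_div_iff₀ hB]; exact htAB
    have hk := key t ht0.le ht1
    nlinarith

/-- Sensitivity of the cleared quantity of prosumer `i` to its own bid:
if only `b i` increases, then `(P_Y b') i - (P_Y b) i` lies in `[0, ((I-1)/I) * (b' i - b i)]`. -/
theorem stmt_3 (I L : ℕ) (hI : 2 ≤ I)
    (ptdf : Fin I → Fin L → ℝ) (F : Fin L → ℝ) (hF : ∀ l, 0 ≤ F l)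
    (P : (Fin I → ℝ) → (Fin I → ℝ)) (hP : ∀ b, IsProj I L ptdf F b (P b))
    (i : Fin I) (b b' : Fin I → ℝ)
    (hoff : ∀ j, j ≠ i → b' j = b j) (hbi : b i ≤ b' i) :
    0 ≤ P b' i - P b i ∧
      P b' i - P b i ≤ ((I : ℝ) - 1) / (I : ℝ) * (b' i - b i) := by
  have hPu := hP b
  have hPv := hP b'
  set u := P b with hu
  set v := P b' with hv
  set d : Fin I → ℝ := fun j => v j - u j with hd
  set δ : ℝ := b' i - b i with hδ
  have hδ0 : 0 ≤ δ := by simp [hδ]; linarith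
  -- combined variational inequalities
  have h1 := varineq hPu hPv.1
  have h2 := varineq hPv hPu.1
  have hkey : ∑ j, (d j) ^ 2 ≤ δ * d i := by
    have h3 : ∑ j, ((d j) ^ 2 + (b j - b' j) * d j) ≤ 0 := by
      have heq : ∑ j, ((d j) ^ 2 + (b j - b' j) * d j)
          = (∑ j, (b j - u j) * (v j - u j)) + ∑ j, (b' j - v j) * (u j - v j) := by
        rw [← Finset.sum_add_distrib]
        exact Finset.sum_congr rfl fun j _ => by simp only [hd]; ring
      rw [heq]; linarith
    rw [Finset.sum_add_distrib] at h3
    have h4 : ∑ j, (b j - b' j) * d j = -(δ * d i) := by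
      rw [Finset.sum_eq_single i]
      · simp [hδ]; ring
      · intro j _ hj
        rw [hoff j hj]; ring
      · simp
    rw [h4] at h3
    linarith
  -- balance: sum of d is zero
  have hsum : ∑ j, d j = 0 := by
    have e1 : ∑ j, u j = 0 := hPu.1.1
    have e2 : ∑ j, v j = 0 := hPv.1.1
    simp only [hd, Finset.sum_sub_distrib, e1, e2, sub_zero]
  -- Cauchy–Schwarz on the complement of i
  set s := Finset.univ.erase i with hs
  have hcard : (#s : ℝ) = (I : ℝ) - 1 := by
    rw [hs, Finset.card_erase_of_mem (Finset.mem_univ i)]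
    simp
    rw [Nat.cast_sub (by omega)]
    simp
  have hsplit : ∑ j, d j = d i + ∑ j ∈ s, d j := by
    rw [hs, ← Finset.add_sum_erase _ _ (Finset.mem_univ i)]
  have hserase : ∑ j ∈ s, d j = -(d i) := by
    have := hsplit.symm.trans hsum
    linarith
  have hsplit2 : ∑ j, (d j) ^ 2 = (d i) ^ 2 + ∑ j ∈ s, (d j) ^ 2 := by
    rw [hs, ← Finset.add_sum_erase _ _ (Finset.mem_univ i)]
  have hCS : (d i) ^ 2 ≤ ((I : ℝ) - 1) * ∑ j ∈ s, (d j) ^ 2 := by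
    have := sq_sum_le_card_mul_sum_sq (s := s) (f := d)
    rw [hserase, hcard] at this
    calc (d i) ^ 2 = (-(d i)) ^ 2 := by ring
      _ ≤ _ := this
  set x : ℝ := d i with hx
  set S : ℝ := ∑ j ∈ s, (d j) ^ 2 with hS
  have hS0 : 0 ≤ S := Finset.sum_nonneg fun j _ => sq_nonneg _
  have hx2 : x ^ 2 + S ≤ δ * x := by rw [← hsplit2]; exact hkey
  have hn : (2 : ℝ) ≤ (I : ℝ) := by exact_mod_cast hI
  have hn0 : (0 : ℝ) < (I : ℝ) := by linarith
  have hlow : 0 ≤ x := by nlinarith [sq_nonneg x]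
  constructor
  · exact hlow
  · show x ≤ ((I : ℝ) - 1) / (I : ℝ) * δ
    rcases eq_or_lt_of_le hlow with h0 | h0
    · rw [← h0]
      have h5 : 0 ≤ ((I : ℝ) - 1) / (I : ℝ) := div_nonneg (by linarith) hn0.le
      exact mul_nonneg h5 hδ0
    · -- from x² ≤ (I-1)S and x² + S ≤ δx : I x² ≤ (I-1) δ x, so I x ≤ (I-1) δ
      have hIx : (I : ℝ) * x ≤ ((I : ℝ) - 1) * δ := by
        nlinarith
      rw [div_mul_eq_mul_div, le_div_iff₀ hn0]
      linarith [hIx]
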